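/- Let A be a seminormal commutative ring. Then the polynomial ring A[t] is seminormal. -/

import Mathlib

open Polynomial

/-- In a reduced ring, an element is determined by its square and cube. -/
lemma sn_unique {B : Type*} [CommRing B] [IsReduced B] {x y : B}
    (h2 : x ^ 2 = y ^ 2) (h3 : x ^ 3 = y ^ 3) : x = y := by
  have hxy : (x - y) * x = 0 := by
    have : ((x - y) * x) ^ 2 = 0 := by
      have hx4 : x ^ 4 = y ^ 4 := by
        calc x ^ 4 = x ^ 2 * x ^ 2 := by ring
        _ = y ^ 2 * y ^ 2 := by rw [h2]
        _ = y ^ 4 := by ring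
      have hx3y : x ^ 3 * y = y ^ 4 := by rw [h3]; ring
      calc ((x - y) * x) ^ 2 = x ^ 4 - 2 * (x ^ 3 * y) + (x^2) * y ^ 2 := by ring
      _ = y ^ 4 - 2 * y ^ 4 + y ^ 2 * y ^ 2 := by rw [hx4, hx3y, h2]
      _ = 0 := by ring
    exact IsReduced.eq_zero _ ⟨2, this⟩
  have hyy : (x - y) * y = 0 := by
    have : ((x - y) * y) ^ 2 = 0 := by
      have hx2y2 : x ^ 2 * y ^ 2 = y ^ 4 := by rw [h2]; ring
      have hxy3 : x * y ^ 3 = y ^ 4 := by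
        have : x * x ^ 3 = x * y ^ 3 := by rw [h3]
        have h4 : x ^ 4 = x * y ^ 3 := by rw [← this]; ring
        have hx4 : x ^ 4 = y ^ 4 := by
          calc x ^ 4 = x ^ 2 * x ^ 2 := by ring
          _ = y ^ 2 * y ^ 2 := by rw [h2]
          _ = y ^ 4 := by ring
        rw [← h4, hx4]
      calc ((x - y) * y) ^ 2 = x ^ 2 * y ^ 2 - 2 * (x * y ^ 3) + y ^ 4 := by ring
      _ = y ^ 4 - 2 * y ^ 4 + y ^ 4 := by rw [hx2y2, hxy3]
      _ = 0 := by ring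
    exact IsReduced.eq_zero _ ⟨2, this⟩
  have : (x - y) ^ 2 = 0 := by
    calc (x - y) ^ 2 = (x - y) * x - (x - y) * y := by ring
    _ = 0 := by rw [hxy, hyy]; ring
  have := IsReduced.eq_zero _ ⟨2, this⟩
  linear_combination this

lemma sn_reduced {A : Type*} [CommRing A]
    (hsn : ∀ b c : A, b ^ 3 = c ^ 2 → ∃ a : A, b = a ^ 2 ∧ c = a ^ 3) :
    IsReduced A := by
  rw [isReduced_iff]
  intro x ⟨n, hn⟩
  -- first reduce to x^2 = 0
  suffices H : ∀ y : A, y ^ 2 = 0 → y = 0 by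
    induction n using Nat.strong_induction_on generalizing x with
    | _ n IH =>
      match n with
      | 0 => simpa using congrArg (· * x) hn
      | 1 => simpa using hn
      | (k+2) =>
        have : (x ^ (k+1)) ^ 2 = 0 := by
          have : x ^ (k+2) * x ^ k = 0 := by rw [hn]; ring
          calc (x ^ (k+1)) ^ 2 = x ^ (k+2) * x ^ k := by ring
          _ = 0 := this
        have hxk : x ^ (k + 1) = 0 := H _ this
        exact IH (k+1) (by omega) x hxk
  intro y hy
  obtain ⟨a, ha2, ha3⟩ := hsn 0 y (by rw [hy]; norm_num)
  have ha : a ^ 2 = 0 := ha2.symm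
  rw [ha3, pow_succ, ha, zero_mul]


lemma coeff_mul_mem {D : Type*} [CommRing D] (T : Subring D) {p q : D[X]}
    (hp : ∀ i, p.coeff i ∈ T) (hq : ∀ i, q.coeff i ∈ T) : ∀ i, (p * q).coeff i ∈ T := by
  intro i
  rw [coeff_mul]
  exact sum_mem (fun x _ => T.mul_mem (hp _) (hq _))

/-- Key closure lemma: if `T` is a "seminormally closed" subring of a reduced ring `D`,
and `h : D[X]` has `h^2` and `h^3` with all coefficients in `T`, then all coefficients
of `h` lie in `T`. -/
lemma sn_poly_closed {D : Type*} [CommRing D] [IsReduced D] (T : Subring D)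
    (hT : ∀ x : D, x ^ 2 ∈ T → x ^ 3 ∈ T → x ∈ T) :
    ∀ n : ℕ, ∀ h : D[X], h.natDegree ≤ n →
      (∀ i, (h ^ 2).coeff i ∈ T) → (∀ i, (h ^ 3).coeff i ∈ T) → ∀ i, h.coeff i ∈ T := by
  intro n
  induction n using Nat.strong_induction_on with
  | _ n IH =>
    intro h hdeg h2 h3
    have h2' : ∀ i, (h * h).coeff i ∈ T := by
      intro i; have e : h * h = h ^ 2 := by ring
      rw [e]; exact h2 i
    have h3' : ∀ i, (h * h * h).coeff i ∈ T := by
      intro i; have e : h * h * h = h ^ 3 := by ring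
      rw [e]; exact h3 i
    by_cases hd0 : h.natDegree = 0
    · -- constant case
      intro i
      rcases Nat.eq_zero_or_pos i with rfl | hi
      · refine hT _ ?_ ?_
        · have e : h.coeff 0 ^ 2 = (h * h).coeff 0 := by
            rw [mul_coeff_zero]; ring
          rw [e]; exact h2' 0
        · have e : h.coeff 0 ^ 3 = (h * h * h).coeff 0 := by
            rw [mul_coeff_zero, mul_coeff_zero]; ring
          rw [e]; exact h3' 0
      · rw [coeff_eq_zero_of_natDegree_lt (by omega)]; exact T.zero_mem
    -- main case : d ≥ 1
    set d := h.natDegree with hd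
    set c := h.coeff d with hc
    have hd1 : 1 ≤ d := by omega
    have hhdeg : h.natDegree ≤ d := le_rfl
    have hcT : c ∈ T := by
      refine hT _ ?_ ?_
      · have e : c ^ 2 = (h * h).coeff (d + d) := by
          rw [coeff_mul_add_eq_of_natDegree_le hhdeg hhdeg]; ring
        rw [e]; exact h2' _
      · have e : c ^ 3 = (h * h * h).coeff (d + d + d) := by
          have hmul : (h * h).natDegree ≤ d + d :=
            le_trans (natDegree_mul_le) (by omega)
          rw [coeff_mul_add_eq_of_natDegree_le hmul hhdeg,
            coeff_mul_add_eq_of_natDegree_le hhdeg hhdeg]; ring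
        rw [e]; exact h3' _
    -- Step 2 : ∃ M, c^M * (every coefficient) ∈ T, by downward induction from the top
    have step2 : ∀ δ : ℕ, ∃ M : ℕ, ∀ i, d - δ ≤ i → c ^ M * h.coeff i ∈ T := by
      intro δ
      induction δ with
      | zero =>
        refine ⟨1, fun i hi => ?_⟩
        rcases eq_or_lt_of_le hi with rfl | h'
        · rw [pow_one]; exact T.mul_mem hcT hcT
        · rw [coeff_eq_zero_of_natDegree_lt h', mul_zero]; exact T.zero_mem
      | succ δ IHδ =>
        obtain ⟨M, hM⟩ := IHδ
        by_cases hδ : d ≤ δ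
        · exact ⟨M, fun i hi => hM i (by omega)⟩
        · set a := d - (δ + 1) with ha
          have halt : a < d := by omega
          have ha1 : a + 1 = d - δ := by omega
          set x := h.coeff a with hx
          set U : D[X] := ∑ u ∈ Finset.range (a + 1), monomial u (h.coeff u) with hU
          set V : D[X] := h - U with hV
          have hUc : ∀ i, U.coeff i = if i ≤ a then h.coeff i else 0 := by
            intro i
            rw [hU, finset_sum_coeff]
            simp only [coeff_monomial]
            rw [Finset.sum_ite_eq' (Finset.range (a + 1)) i (fun u => h.coeff u)]
            simp [Nat.lt_succ_iff]
          have hVc : ∀ i, V.coeff i = if i ≤ a then 0 else h.coeff i := by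
            intro i
            rw [hV, coeff_sub, hUc]
            split_ifs <;> ring
          have hUdeg : U.natDegree ≤ a := by
            refine natDegree_le_iff_coeff_eq_zero.mpr fun N hN => ?_
            rw [hUc]; simp [Nat.not_le.mpr hN]
          have hVdeg : V.natDegree ≤ d := by
            refine natDegree_le_iff_coeff_eq_zero.mpr fun N hN => ?_
            rw [hVc]
            split_ifs with hNa
            · rfl
            · exact coeff_eq_zero_of_natDegree_lt hN
          have hVd : V.coeff d = c := by
            rw [hVc]; simp [Nat.not_le.mpr halt]; rfl
          have hUa : U.coeff a = x := by rw [hUc]; simp; rfl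
          have hsplit : h = V + U := by rw [hV]; ring
          -- identity (A) at degree d + a
          have hVU : (V * U).coeff (d + a) = c * x := by
            rw [coeff_mul_add_eq_of_natDegree_le hVdeg hUdeg, hVd, hUa]
          have hUU : (U * U).coeff (d + a) = 0 := by
            refine coeff_eq_zero_of_natDegree_lt ?_
            have : (U * U).natDegree ≤ a + a :=
              le_trans natDegree_mul_le (add_le_add hUdeg hUdeg)
            omega
          have idA : (h * h).coeff (d + a)
              = (V * V).coeff (d + a) + (c * x + c * x) := by
            have e : h * h = V * V + (V * U + V * U + U * U) := by rw [hsplit]; ring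
            rw [e, coeff_add, coeff_add, coeff_add, hVU, hUU]; ring
          -- identity (B) at degree d + d + a
          have hVVdeg : (V * V).natDegree ≤ d + d :=
            le_trans natDegree_mul_le (by omega)
          have hVVd : (V * V).coeff (d + d) = c * c := by
            rw [coeff_mul_add_eq_of_natDegree_le hVdeg hVdeg, hVd]
          have hVVU : (V * V * U).coeff (d + d + a) = c * c * x := by
            rw [coeff_mul_add_eq_of_natDegree_le hVVdeg hUdeg, hVVd, hUa]
          have hVUU : (V * (U * U)).coeff (d + d + a) = 0 := by
            refine coeff_eq_zero_of_natDegree_lt ?_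
            have : (V * (U * U)).natDegree ≤ d + (a + a) :=
              le_trans natDegree_mul_le
                (add_le_add hVdeg (le_trans natDegree_mul_le (by omega)))
            omega
          have hUUU : (U * U * U).coeff (d + d + a) = 0 := by
            refine coeff_eq_zero_of_natDegree_lt ?_
            have : (U * U * U).natDegree ≤ a + a + a :=
              le_trans natDegree_mul_le
                (add_le_add (le_trans natDegree_mul_le (by omega)) hUdeg)
            omega
          have idB : (h * h * h).coeff (d + d + a)
              = (V * V * V).coeff (d + d + a) + (c * c * x + c * c * x + c * c * x) := by
            have e : h * h * h = V * V * V
                + (V * V * U + V * V * U + V * V * U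
                  + (V * (U * U) + V * (U * U) + V * (U * U)) + U * U * U) := by
              rw [hsplit]; ring
            rw [e]
            simp only [coeff_add]
            rw [hVVU, hVUU, hUUU]; ring
          -- scaled middle-part memberships
          have hWc : ∀ i, (C (c ^ M) * V).coeff i ∈ T := by
            intro i
            rw [coeff_C_mul, hVc]
            split_ifs with hia
            · rw [mul_zero]; exact T.zero_mem
            · exact hM i (by omega)
          have hW2 : ∀ i, (C (c ^ M) * V * (C (c ^ M) * V)).coeff i ∈ T :=
            coeff_mul_mem T hWc hWc
          have hW3 : ∀ i, (C (c ^ M) * V * (C (c ^ M) * V) * (C (c ^ M) * V)).coeff i ∈ T :=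
            coeff_mul_mem T hW2 hWc
          -- extract memberships
          have eW2 : (C (c ^ M) * V * (C (c ^ M) * V)).coeff (d + a)
              = c ^ M * (c ^ M * ((V * V).coeff (d + a))) := by
            have e : C (c ^ M) * V * (C (c ^ M) * V) = C (c ^ M) * (C (c ^ M) * (V * V)) := by
              ring
            rw [e, coeff_C_mul, coeff_C_mul]
          have eW3 : (C (c ^ M) * V * (C (c ^ M) * V) * (C (c ^ M) * V)).coeff (d + d + a)
              = c ^ M * (c ^ M * (c ^ M * ((V * V * V).coeff (d + d + a)))) := by
            have e : C (c ^ M) * V * (C (c ^ M) * V) * (C (c ^ M) * V)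
                = C (c ^ M) * (C (c ^ M) * (C (c ^ M) * (V * V * V))) := by ring
            rw [e, coeff_C_mul, coeff_C_mul, coeff_C_mul]
          have memA : c ^ M * (c ^ M * (c * x + c * x)) ∈ T := by
            have e : c ^ M * (c ^ M * (c * x + c * x))
                = c ^ M * (c ^ M * ((h * h).coeff (d + a)))
                  - (C (c ^ M) * V * (C (c ^ M) * V)).coeff (d + a) := by
              rw [eW2, idA]; ring
            rw [e]
            exact T.sub_mem
              (T.mul_mem (T.pow_mem hcT M) (T.mul_mem (T.pow_mem hcT M) (h2' _))) (hW2 _)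
          have memB : c ^ M * (c ^ M * (c ^ M * (c * c * x + c * c * x + c * c * x))) ∈ T := by
            have e : c ^ M * (c ^ M * (c ^ M * (c * c * x + c * c * x + c * c * x)))
                = c ^ M * (c ^ M * (c ^ M * ((h * h * h).coeff (d + d + a))))
                  - (C (c ^ M) * V * (C (c ^ M) * V) * (C (c ^ M) * V)).coeff (d + d + a) := by
              rw [eW3, idB]; ring
            rw [e]
            exact T.sub_mem
              (T.mul_mem (T.pow_mem hcT M)
                (T.mul_mem (T.pow_mem hcT M) (T.mul_mem (T.pow_mem hcT M) (h3' _)))) (hW3 _)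
          -- combine: c^(3M+2) * x ∈ T
          have memX : c ^ (M + M + M + 2) * x ∈ T := by
            have e : c ^ (M + M + M + 2) * x
                = c ^ M * (c ^ M * (c ^ M * (c * c * x + c * c * x + c * c * x)))
                  - c ^ (M + 1) * (c ^ M * (c ^ M * (c * x + c * x))) := by
              ring
            rw [e]
            exact T.sub_mem memB (T.mul_mem (T.pow_mem hcT (M + 1)) memA)
          refine ⟨M + M + M + 2, fun i hi => ?_⟩
          rcases eq_or_lt_of_le hi with hieq | hgt
          · rw [← hieq]; exact memX
          · have e : c ^ (M + M + M + 2) * h.coeff i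
                = c ^ (M + M + 2) * (c ^ M * h.coeff i) := by
              rw [← mul_assoc, ← pow_add]; ring_nf
            rw [e]
            exact T.mul_mem (T.pow_mem hcT _) (hM i (by omega))
    obtain ⟨M, hM⟩ := step2 d
    have hM' : ∀ i, c ^ M * h.coeff i ∈ T := fun i => hM i (by omega)
    -- Step 3 : descend the power of c using the degree induction hypothesis
    have step3 : ∀ k : ℕ, ∀ j, M - k ≤ j → ∀ i, c ^ j * h.coeff i ∈ T := by
      intro k
      induction k with
      | zero =>
        intro j hj i
        have e : c ^ j * h.coeff i = c ^ (j - M) * (c ^ M * h.coeff i) := by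
          rw [← mul_assoc, ← pow_add]
          congr 2
          omega
        rw [e]
        exact T.mul_mem (T.pow_mem hcT _) (hM' i)
      | succ k IHk =>
        intro j hj i
        by_cases hjk : M - k ≤ j
        · exact IHk j hjk i
        · -- here j + 1 = M - k
          have hj1 : M - k ≤ j + 1 := by omega
          set w : D[X] := C (c ^ j) * h - C (c ^ (j + 1)) * X ^ d with hw
          have hXd : ∀ i : ℕ, ((X : D[X]) ^ d).coeff i ∈ T := by
            intro i
            rw [coeff_X_pow]
            split_ifs
            · exact T.one_mem
            · exact T.zero_mem
          have hwdeg : w.natDegree ≤ d - 1 := by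
            refine natDegree_le_iff_coeff_eq_zero.mpr fun N hN => ?_
            have hNd : d ≤ N := by omega
            rw [hw, coeff_sub, coeff_C_mul, coeff_C_mul, coeff_X_pow]
            rcases eq_or_lt_of_le hNd with rfl | hNgt
            · simp [← hc, pow_succ]
            · rw [coeff_eq_zero_of_natDegree_lt hNgt, if_neg (by omega)]
              ring
          have hw2 : ∀ i, (w * w).coeff i ∈ T := by
            have e : w * w
                = C (c ^ j) * (C (c ^ j) * (h * h))
                  - (C (c ^ j) * (C (c ^ (j + 1)) * (h * X ^ d))
                    + C (c ^ j) * (C (c ^ (j + 1)) * (h * X ^ d)))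
                  + C (c ^ (j + 1)) * (C (c ^ (j + 1)) * (X ^ d * X ^ d)) := by
              rw [hw]; ring
            intro i
            rw [e, coeff_add, coeff_sub, coeff_add]
            refine T.add_mem (T.sub_mem ?_ (T.add_mem ?_ ?_)) ?_
            · rw [coeff_C_mul, coeff_C_mul]
              exact T.mul_mem (T.pow_mem hcT _) (T.mul_mem (T.pow_mem hcT _) (h2' _))
            all_goals try {
              rw [coeff_C_mul, coeff_C_mul, coeff_mul_X_pow']
              split_ifs
              · exact T.mul_mem (T.pow_mem hcT _) (IHk (j + 1) hj1 _)
              · rw [mul_zero, mul_zero]; exact T.zero_mem }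
            · rw [coeff_C_mul, coeff_C_mul]
              exact T.mul_mem (T.pow_mem hcT _) (T.mul_mem (T.pow_mem hcT _)
                (coeff_mul_mem T hXd hXd _))
          have hw3 : ∀ i, (w * w * w).coeff i ∈ T := by
            have e : w * w * w
                = C (c ^ j) * (C (c ^ j) * (C (c ^ j) * (h * h * h)))
                  - (C (c ^ j) * (C (c ^ j) * (C (c ^ (j + 1)) * (h * h * X ^ d)))
                    + C (c ^ j) * (C (c ^ j) * (C (c ^ (j + 1)) * (h * h * X ^ d)))
                    + C (c ^ j) * (C (c ^ j) * (C (c ^ (j + 1)) * (h * h * X ^ d))))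
                  + (C (c ^ j) * (C (c ^ (j + 1)) * (C (c ^ (j + 1)) * (h * (X ^ d * X ^ d))))
                    + C (c ^ j) * (C (c ^ (j + 1)) * (C (c ^ (j + 1)) * (h * (X ^ d * X ^ d))))
                    + C (c ^ j) * (C (c ^ (j + 1)) * (C (c ^ (j + 1)) * (h * (X ^ d * X ^ d)))))
                  - C (c ^ (j + 1)) * (C (c ^ (j + 1)) * (C (c ^ (j + 1))
                      * (X ^ d * (X ^ d * X ^ d)))) := by
              rw [hw]; ring
            intro i
            rw [e, coeff_sub, coeff_add, coeff_sub, coeff_add, coeff_add, coeff_add, coeff_add]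
            refine T.sub_mem (T.add_mem (T.sub_mem ?_ (T.add_mem (T.add_mem ?_ ?_) ?_))
              (T.add_mem (T.add_mem ?_ ?_) ?_)) ?_
            · rw [coeff_C_mul, coeff_C_mul, coeff_C_mul]
              exact T.mul_mem (T.pow_mem hcT _) (T.mul_mem (T.pow_mem hcT _)
                (T.mul_mem (T.pow_mem hcT _) (h3' _)))
            all_goals try {
              rw [coeff_C_mul, coeff_C_mul, coeff_C_mul, coeff_mul_X_pow']
              split_ifs
              · exact T.mul_mem (T.pow_mem hcT _) (T.mul_mem (T.pow_mem hcT _)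
                  (T.mul_mem (T.pow_mem hcT _) (h2' _)))
              · simp only [mul_zero]; exact T.zero_mem }
            all_goals try {
              have exx : h * ((X : D[X]) ^ d * X ^ d) = h * X ^ (d + d) := by
                rw [← pow_add]
              rw [coeff_C_mul, coeff_C_mul, coeff_C_mul, exx, coeff_mul_X_pow']
              split_ifs
              · exact T.mul_mem (T.pow_mem hcT _)
                  (T.mul_mem (T.pow_mem hcT _) (IHk (j + 1) hj1 _))
              · simp only [mul_zero]; exact T.zero_mem }
            · rw [coeff_C_mul, coeff_C_mul, coeff_C_mul]
              exact T.mul_mem (T.pow_mem hcT _) (T.mul_mem (T.pow_mem hcT _)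
                (T.mul_mem (T.pow_mem hcT _)
                  (coeff_mul_mem T hXd (coeff_mul_mem T hXd hXd) _)))
          have hwT : ∀ i, w.coeff i ∈ T := by
            refine IH (d - 1) (by omega) w hwdeg ?_ ?_
            · intro i
              have e : w ^ 2 = w * w := by ring
              rw [e]; exact hw2 i
            · intro i
              have e : w ^ 3 = w * w * w := by ring
              rw [e]; exact hw3 i
          have e : c ^ j * h.coeff i = w.coeff i + c ^ (j + 1) * ((X : D[X]) ^ d).coeff i := by
            rw [hw, coeff_sub, coeff_C_mul, coeff_C_mul]; ring
          rw [e]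
          exact T.add_mem (hwT i) (T.mul_mem (T.pow_mem hcT _) (hXd i))
    intro i
    have := step3 M 0 (by omega) i
    simpa using this

/-- Over a field, a pair `f, g` with `f^3 = g^2` admits a polynomial square/cube root. -/
lemma field_sqrt {K : Type*} [Field K] (fp gp : K[X]) (hfg : fp ^ 3 = gp ^ 2) :
    ∃ θ : K[X], θ ^ 2 = fp ∧ θ ^ 3 = gp ∧ θ.natDegree ≤ fp.natDegree := by
  by_cases hf0 : fp = 0
  · refine ⟨0, by simp [hf0], ?_, by simp⟩
    have hg2 : gp ^ 2 = 0 := by rw [← hfg, hf0]; simp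
    have hg : gp = 0 := by
      have := pow_eq_zero_iff (n := 2) (by norm_num) |>.mp hg2
      exact this
    simp [hg]
  · set F := FractionRing (K[X])
    set ι := algebraMap (K[X]) F with hι
    have hinj : Function.Injective ι := IsFractionRing.injective (K[X]) F
    have hfι : ι fp ≠ 0 := fun h => hf0 (hinj (by simpa using h))
    set x : F := ι gp / ι fp with hx
    have hx2 : x ^ 2 = ι fp := by
      rw [hx, div_pow, ← map_pow, ← map_pow]
      rw [eq_comm, eq_div_iff (by rw [map_pow]; exact pow_ne_zero 2 hfι)]
      rw [← map_mul]
      congr 1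
      rw [← hfg]; ring
    have hint : IsIntegral (K[X]) x := by
      refine ⟨X ^ 2 - C fp, ?_, ?_⟩
      · apply monic_X_pow_sub_C
        norm_num
      · simp only [eval₂_sub, eval₂_pow, eval₂_X, eval₂_C]
        rw [hx2]; ring
    obtain ⟨θ, hθ⟩ := IsIntegrallyClosed.isIntegral_iff.mp hint
    have hθ2 : θ ^ 2 = fp := by
      apply hinj
      rw [map_pow, hθ, hx2]
    have hθ3 : θ ^ 3 = gp := by
      apply hinj
      rw [map_pow, hθ]
      rw [show (3:ℕ) = 2 + 1 by rfl, pow_add, hx2, pow_one, hx]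
      rw [mul_comm]; exact div_mul_cancel₀ _ hfι
    have hdeg : θ.natDegree ≤ fp.natDegree := by
      have h2d : fp.natDegree = 2 * θ.natDegree := by rw [← hθ2, natDegree_pow]
      omega
    exact ⟨θ, hθ2, hθ3, hdeg⟩

/-- If `A` is a seminormal commutative ring, then the polynomial ring `A[t]` is seminormal. -/
theorem seminormal_polynomial {A : Type*} [CommRing A]
    (hsn : ∀ b c : A, b ^ 3 = c ^ 2 → ∃ a : A, b = a ^ 2 ∧ c = a ^ 3) :
    ∀ b c : Polynomial A, b ^ 3 = c ^ 2 → ∃ a : Polynomial A, b = a ^ 2 ∧ c = a ^ 3 := by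
  intro f g hfg
  have hred : IsReduced A := sn_reduced hsn
  classical
  set K : PrimeSpectrum A → Type _ := fun p => FractionRing (A ⧸ p.asIdeal) with hK
  set toK : ∀ p : PrimeSpectrum A, A →+* K p := fun p =>
    (algebraMap (A ⧸ p.asIdeal) (K p)).comp (Ideal.Quotient.mk p.asIdeal) with htoK
  set D := ∀ p, K p with hD
  set φ : A →+* D := Pi.ringHom toK with hφdef
  have hφ : Function.Injective φ := by
    rw [injective_iff_map_eq_zero]
    intro a ha
    have hmem : a ∈ nilradical A := by
      rw [nilradical_eq_sInf]
      refine Ideal.mem_sInf.mpr fun I hI => ?_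
      haveI : I.IsPrime := hI
      set p : PrimeSpectrum A := ⟨I, hI⟩
      have h1 : toK p a = 0 := congrFun ha p
      have h2 : Ideal.Quotient.mk p.asIdeal a = 0 := by
        apply IsFractionRing.injective (A ⧸ p.asIdeal) (K p)
        rw [map_zero]
        exact h1
      rwa [Ideal.Quotient.eq_zero_iff_mem] at h2
    rw [nilradical_eq_zero] at hmem
    simpa using hmem
  -- per-prime square root
  have hstep : ∀ p : PrimeSpectrum A, ∃ θ : (K p)[X],
      θ ^ 2 = f.map (toK p) ∧ θ ^ 3 = g.map (toK p) ∧ θ.natDegree ≤ f.natDegree := by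
    intro p
    have hfg' : (f.map (toK p)) ^ 3 = (g.map (toK p)) ^ 2 := by
      rw [← Polynomial.map_pow, ← Polynomial.map_pow, hfg]
    obtain ⟨θ, h1, h2, h3⟩ := field_sqrt (f.map (toK p)) (g.map (toK p)) hfg'
    exact ⟨θ, h1, h2, le_trans h3 natDegree_map_le⟩
  choose θ hθ2 hθ3 hθdeg using hstep
  set n := f.natDegree with hn
  set Θ : D[X] := ∑ i ∈ Finset.range (n + 1),
      C (fun p => (θ p).coeff i : D) * X ^ i with hΘ
  have hΘc : ∀ i, Θ.coeff i
      = if i ≤ n then (fun p => (θ p).coeff i : D) else 0 := by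
    intro i
    rw [hΘ, finset_sum_coeff]
    simp only [C_mul_X_pow_eq_monomial, coeff_monomial]
    rw [Finset.sum_ite_eq' (Finset.range (n + 1)) i (fun u => (fun p => (θ p).coeff u : D))]
    simp [Nat.lt_succ_iff]
  have hΘcp : ∀ i (p : PrimeSpectrum A), (Θ.coeff i) p = (θ p).coeff i := by
    intro i p
    rw [hΘc]
    split_ifs with hin
    · rfl
    · have : (θ p).coeff i = 0 :=
        coeff_eq_zero_of_natDegree_lt (lt_of_le_of_lt (hθdeg p) (by omega))
      rw [this]; rfl
  -- componentwise coefficient of products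
  have hmulc : ∀ (P Q : D[X]) (i : ℕ) (p : PrimeSpectrum A),
      ((P * Q).coeff i) p = ∑ uv ∈ Finset.HasAntidiagonal.antidiagonal i, (P.coeff uv.1 p) * (Q.coeff uv.2 p) := by
    intro P Q i p
    rw [coeff_mul]
    rw [Finset.sum_apply]
    rfl
  have hΘ2 : Θ ^ 2 = f.map φ := by
    apply Polynomial.ext
    intro i
    funext p
    have lhs : ((Θ ^ 2).coeff i) p = ((θ p) ^ 2).coeff i := by
      rw [pow_two, hmulc, pow_two, coeff_mul]
      exact Finset.sum_congr rfl fun uv _ => by rw [hΘcp, hΘcp]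
    rw [lhs, hθ2 p, coeff_map, coeff_map]
    rfl
  have hΘ3 : Θ ^ 3 = g.map φ := by
    apply Polynomial.ext
    intro i
    funext p
    have e3 : Θ ^ 3 = Θ ^ 2 * Θ := by ring
    have lhs : ((Θ ^ 3).coeff i) p = ((f.map (toK p)) * θ p).coeff i := by
      rw [e3, hΘ2, hmulc, coeff_mul]
      refine Finset.sum_congr rfl fun uv _ => ?_
      rw [hΘcp, coeff_map, coeff_map]
      rfl
    have e4 : (f.map (toK p)) * θ p = (θ p) ^ 3 := by
      rw [← hθ2 p]; ring
    rw [lhs, e4, hθ3 p, coeff_map, coeff_map]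
    rfl
  -- the closure property of the image of A
  haveI : IsReduced D := inferInstance
  have hTcl : ∀ x : D, x ^ 2 ∈ φ.range → x ^ 3 ∈ φ.range → x ∈ φ.range := by
    rintro x ⟨b, hb⟩ ⟨c', hc'⟩
    have hbc : b ^ 3 = c' ^ 2 := by
      apply hφ
      rw [map_pow, map_pow, hb, hc']
      ring
    obtain ⟨a, ha2, ha3⟩ := hsn b c' hbc
    refine ⟨a, ?_⟩
    have e2 : (φ a) ^ 2 = x ^ 2 := by rw [← map_pow, ← ha2, hb]
    have e3 : (φ a) ^ 3 = x ^ 3 := by rw [← map_pow, ← ha3, hc']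
    exact sn_unique e2 e3
  have hcoefT : ∀ i, Θ.coeff i ∈ (φ.range : Subring D) := by
    refine sn_poly_closed φ.range hTcl Θ.natDegree Θ le_rfl ?_ ?_
    · intro i; rw [hΘ2, coeff_map]; exact ⟨f.coeff i, rfl⟩
    · intro i; rw [hΘ3, coeff_map]; exact ⟨g.coeff i, rfl⟩
  choose α hα using hcoefT
  set H : A[X] := ∑ i ∈ Finset.range (Θ.natDegree + 1), C (α i) * X ^ i with hH
  have hHmap : H.map φ = Θ := by
    rw [hH]
    rw [Polynomial.map_sum]
    have e : ∀ i, (C (α i) * X ^ i : A[X]).map φ = C (Θ.coeff i) * X ^ i := by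
      intro i
      rw [Polynomial.map_mul, Polynomial.map_C, Polynomial.map_pow, Polynomial.map_X, hα]
    rw [Finset.sum_congr rfl fun i _ => e i]
    simp only [C_mul_X_pow_eq_monomial]
    exact (as_sum_range' Θ (Θ.natDegree + 1) (by omega)).symm
  have hmapinj : Function.Injective (Polynomial.map φ : A[X] → D[X]) :=
    Polynomial.map_injective φ hφ
  refine ⟨H, ?_, ?_⟩
  · apply hmapinj
    rw [Polynomial.map_pow, hHmap, hΘ2]
  · apply hmapinj
    rw [Polynomial.map_pow, hHmap, hΘ3]
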